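/- Let f̂ : [0,1]² → ℝ be any bounded, continuous, strictly positive, symmetric function (in particular, any kernel density estimate built from finitely many sample points using a strictly positive kernel such as the Gaussian). Then there exists a unique strictly positive continuous function ĥ on [0,1] such that ∫₀¹ ĥ(x) f̂(x,y) ĥ(y) dx = 1 for all y ∈ [0,1], and the iteration g⁽⁰⁾ ≡ 1, g⁽ᵗ⁺¹⁾(x) = √( g⁽ᵗ⁾(x) / ∫₀¹ f̂(x,y) g⁽ᵗ⁾(y) dy ) converges uniformly on [0,1] to ĥ. -/

import Mathlib

open MeasureTheory Filter intervalIntegral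

namespace KSK1827

noncomputable def Fi (fe : ℝ → ℝ → ℝ) (g : ℝ → ℝ) (x : ℝ) : ℝ :=
  ∫ y in (0:ℝ)..1, fe x y * g y

structure Nice (fe : ℝ → ℝ → ℝ) (m M : ℝ) : Prop where
  cont : Continuous (Function.uncurry fe)
  mpos : 0 < m
  lb : ∀ x y, m ≤ fe x y
  ub : ∀ x y, fe x y ≤ M

noncomputable def rseq (θ ρ₀ : ℝ) : ℕ → ℝ
  | 0 => ρ₀
  | (t+1) => Real.sqrt (rseq θ ρ₀ t * (1 + θ * (rseq θ ρ₀ t - 1)))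

noncomputable def Ge (fe : ℝ → ℝ → ℝ) : ℕ → ℝ → ℝ
  | 0 => fun _ => (1:ℝ)
  | (t+1) => fun x => Real.sqrt (Ge fe t x / Fi fe (Ge fe t) x)

variable {fe : ℝ → ℝ → ℝ} {m M : ℝ} {θ ρ₀ : ℝ}

lemma Nice.mM (hn : Nice fe m M) : m ≤ M := le_trans (hn.lb 0 0) (hn.ub 0 0)

lemma Nice.Mpos (hn : Nice fe m M) : 0 < M := lt_of_lt_of_le hn.mpos hn.mM

lemma Nice.fe_pos (hn : Nice fe m M) (x y : ℝ) : 0 < fe x y := lt_of_lt_of_le hn.mpos (hn.lb x y)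

lemma Nice.cont_slice (hn : Nice fe m M) (x : ℝ) : Continuous (fun y => fe x y) :=
  hn.cont.comp (continuous_const.prodMk continuous_id)

lemma Nice.integ (hn : Nice fe m M) {g : ℝ → ℝ} (hg : ContinuousOn g (Set.Icc 0 1)) (x : ℝ) :
    IntervalIntegrable (fun y => fe x y * g y) volume 0 1 := by
  apply ContinuousOn.intervalIntegrable
  rw [Set.uIcc_of_le (zero_le_one)]
  exact ((hn.cont_slice x).continuousOn).mul hg

lemma icc_integrable {g : ℝ → ℝ} (hg : ContinuousOn g (Set.Icc 0 1)) :
    IntervalIntegrable g volume 0 1 := by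
  apply ContinuousOn.intervalIntegrable
  rwa [Set.uIcc_of_le (zero_le_one)]

lemma Nice.contF (hn : Nice fe m M) {g : ℝ → ℝ} (hg : Continuous g) :
    Continuous (Fi fe g) := by
  apply intervalIntegral.continuous_parametric_intervalIntegral_of_continuous'
    (f := fun x y => fe x y * g y)
  exact hn.cont.mul (hg.comp continuous_snd)

/-- integral of g over [0,1] between pointwise bounds -/
lemma int_ge {g : ℝ → ℝ} (hg : ContinuousOn g (Set.Icc 0 1)) {a : ℝ}
    (ha : ∀ y ∈ Set.Icc (0:ℝ) 1, a ≤ g y) : a ≤ ∫ y in (0:ℝ)..1, g y := by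
  have := intervalIntegral.integral_mono_on (a := 0) (b := 1) zero_le_one
    (_root_.intervalIntegrable_const (c := a)) (icc_integrable hg) ha
  simpa using this

lemma int_le {g : ℝ → ℝ} (hg : ContinuousOn g (Set.Icc 0 1)) {b : ℝ}
    (hb : ∀ y ∈ Set.Icc (0:ℝ) 1, g y ≤ b) : (∫ y in (0:ℝ)..1, g y) ≤ b := by
  have := intervalIntegral.integral_mono_on (a := 0) (b := 1) zero_le_one
    (icc_integrable hg) (_root_.intervalIntegrable_const (c := b)) hb
  simpa using this

/-- bounds on Fi in terms of the integral of g -/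
lemma Nice.F_ge (hn : Nice fe m M) {g : ℝ → ℝ} (hg : ContinuousOn g (Set.Icc 0 1))
    (hgpos : ∀ y ∈ Set.Icc (0:ℝ) 1, 0 ≤ g y) (x : ℝ) :
    m * ∫ y in (0:ℝ)..1, g y ≤ Fi fe g x := by
  have h1 : (∫ y in (0:ℝ)..1, m * g y) ≤ ∫ y in (0:ℝ)..1, fe x y * g y := by
    apply intervalIntegral.integral_mono_on zero_le_one
      ((icc_integrable hg).const_mul m) (hn.integ hg x)
    intro y hy
    exact mul_le_mul_of_nonneg_right (hn.lb x y) (hgpos y hy)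
  rwa [intervalIntegral.integral_const_mul] at h1

lemma Nice.F_le (hn : Nice fe m M) {g : ℝ → ℝ} (hg : ContinuousOn g (Set.Icc 0 1))
    (hgpos : ∀ y ∈ Set.Icc (0:ℝ) 1, 0 ≤ g y) (x : ℝ) :
    Fi fe g x ≤ M * ∫ y in (0:ℝ)..1, g y := by
  have h1 : (∫ y in (0:ℝ)..1, fe x y * g y) ≤ ∫ y in (0:ℝ)..1, M * g y := by
    apply intervalIntegral.integral_mono_on zero_le_one
      (hn.integ hg x) ((icc_integrable hg).const_mul M)
    intro y hy
    exact mul_le_mul_of_nonneg_right (hn.ub x y) (hgpos y hy)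
  rwa [intervalIntegral.integral_const_mul] at h1


/-- Lemma A: ratio-interval contraction of the integral operator. -/
lemma Nice.lemA (hn : Nice fe m M) {g g' : ℝ → ℝ}
    (hg : ContinuousOn g (Set.Icc 0 1)) (hg' : ContinuousOn g' (Set.Icc 0 1))
    (hg'pos : ∀ y ∈ Set.Icc (0:ℝ) 1, 0 < g' y) {α β : ℝ} (hα : 0 < α)
    (hl : ∀ y ∈ Set.Icc (0:ℝ) 1, α * g' y ≤ g y)
    (hu : ∀ y ∈ Set.Icc (0:ℝ) 1, g y ≤ β * g' y) :
    ∃ α₁ β₁ : ℝ, α ≤ α₁ ∧ β₁ ≤ β ∧ α₁ ≤ β₁ ∧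
      α * β₁ ≤ α₁ * (α + (1 - m/M) * (β - α)) ∧
      ∀ x, α₁ * Fi fe g' x ≤ Fi fe g x ∧ Fi fe g x ≤ β₁ * Fi fe g' x := by
  have h01 : (0:ℝ) < 1 := one_pos
  set I' : ℝ := ∫ y in (0:ℝ)..1, g' y with hI'def
  set Ig : ℝ := ∫ y in (0:ℝ)..1, g y with hIgdef
  have hg'nn : ∀ y ∈ Set.Icc (0:ℝ) 1, 0 ≤ g' y := fun y hy => (hg'pos y hy).le
  have hgnn : ∀ y ∈ Set.Icc (0:ℝ) 1, 0 ≤ g y := fun y hy =>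
    le_trans (mul_nonneg hα.le (hg'nn y hy)) (hl y hy)
  have hαβ : α ≤ β := by
    have h0 : α * g' 0 ≤ β * g' 0 :=
      le_trans (hl 0 (by norm_num)) (hu 0 (by norm_num))
    exact le_of_mul_le_mul_right (by simpa [mul_comm] using h0) (hg'pos 0 (by norm_num))
  have hI' : 0 < I' := by
    apply intervalIntegral.intervalIntegral_pos_of_pos_on (icc_integrable hg')
    · intro y hy; exact hg'pos y (Set.mem_Icc_of_Ioo hy)
    · norm_num
  have hMI' : 0 < M * I' := mul_pos hn.Mpos hI'
  set s : ℝ := Ig - α * I' with hsdef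
  set s' : ℝ := β * I' - Ig with hs'def
  have hαI' : α * I' = ∫ y in (0:ℝ)..1, α * g' y := (intervalIntegral.integral_const_mul _ _).symm
  have hβI' : β * I' = ∫ y in (0:ℝ)..1, β * g' y := (intervalIntegral.integral_const_mul _ _).symm
  have hs : 0 ≤ s := by
    have := intervalIntegral.integral_mono_on (a := 0) (b := 1) zero_le_one
      ((icc_integrable hg').const_mul α) (icc_integrable hg) hl
    rw [intervalIntegral.integral_const_mul] at this
    simpa [hsdef] using sub_nonneg.mpr this
  have hs' : 0 ≤ s' := by
    have := intervalIntegral.integral_mono_on (a := 0) (b := 1) zero_le_one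
      (icc_integrable hg) ((icc_integrable hg').const_mul β) hu
    rw [intervalIntegral.integral_const_mul] at this
    simpa [hs'def] using sub_nonneg.mpr this
  have hsum : s + s' = (β - α) * I' := by simp [hsdef, hs'def]; ring
  -- pointwise lower bound
  have hlow : ∀ x, α * Fi fe g' x + m * s ≤ Fi fe g x := by
    intro x
    have e1 : Fi fe g x - α * Fi fe g' x = ∫ y in (0:ℝ)..1, fe x y * (g y - α * g' y) := by
      rw [Fi, Fi, ← intervalIntegral.integral_const_mul,
        ← intervalIntegral.integral_sub (hn.integ hg x) ((hn.integ hg' x).const_mul α)]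
      congr 1; ext y; ring
    have e2 : (∫ y in (0:ℝ)..1, m * (g y - α * g' y)) ≤
        ∫ y in (0:ℝ)..1, fe x y * (g y - α * g' y) := by
      apply intervalIntegral.integral_mono_on zero_le_one
      · exact ((icc_integrable hg).sub ((icc_integrable hg').const_mul α)).const_mul m
      · have : ContinuousOn (fun y => g y - α * g' y) (Set.Icc 0 1) :=
          hg.sub (continuousOn_const.mul hg')
        exact hn.integ this x
      · intro y hy
        have h1 : 0 ≤ g y - α * g' y := sub_nonneg.mpr (hl y hy)
        exact mul_le_mul_of_nonneg_right (hn.lb x y) h1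
    have e3 : (∫ y in (0:ℝ)..1, m * (g y - α * g' y)) = m * s := by
      rw [intervalIntegral.integral_const_mul,
        intervalIntegral.integral_sub (icc_integrable hg) ((icc_integrable hg').const_mul α),
        intervalIntegral.integral_const_mul]
    linarith [e2, e3.symm.trans_le e2, e1 ▸ (e3 ▸ e2)]
  -- pointwise upper bound
  have hupp : ∀ x, Fi fe g x ≤ β * Fi fe g' x - m * s' := by
    intro x
    have e1 : β * Fi fe g' x - Fi fe g x = ∫ y in (0:ℝ)..1, fe x y * (β * g' y - g y) := by
      rw [Fi, Fi, ← intervalIntegral.integral_const_mul,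
        ← intervalIntegral.integral_sub (((hn.integ hg' x)).const_mul β) (hn.integ hg x)]
      congr 1; ext y; ring
    have e2 : (∫ y in (0:ℝ)..1, m * (β * g' y - g y)) ≤
        ∫ y in (0:ℝ)..1, fe x y * (β * g' y - g y) := by
      apply intervalIntegral.integral_mono_on zero_le_one
      · exact (((icc_integrable hg').const_mul β).sub (icc_integrable hg)).const_mul m
      · have : ContinuousOn (fun y => β * g' y - g y) (Set.Icc 0 1) :=
          (continuousOn_const.mul hg').sub hg
        exact hn.integ this x
      · intro y hy
        have h1 : 0 ≤ β * g' y - g y := sub_nonneg.mpr (hu y hy)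
        exact mul_le_mul_of_nonneg_right (hn.lb x y) h1
    have e3 : (∫ y in (0:ℝ)..1, m * (β * g' y - g y)) = m * s' := by
      rw [intervalIntegral.integral_const_mul,
        intervalIntegral.integral_sub (((icc_integrable hg')).const_mul β) (icc_integrable hg),
        intervalIntegral.integral_const_mul]
    have := e3 ▸ e2
    linarith [e1 ▸ this]
  refine ⟨α + m * s / (M * I'), β - m * s' / (M * I'), ?_, ?_, ?_, ?_, ?_⟩
  · nlinarith [div_nonneg (mul_nonneg hn.mpos.le hs) hMI'.le]
  · nlinarith [div_nonneg (mul_nonneg hn.mpos.le hs') hMI'.le]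
  · have hdiff : (β - m * s' / (M * I')) - (α + m * s / (M * I'))
        = (β - α) * (1 - m / M) := by
      have : m * s / (M * I') + m * s' / (M * I') = (β - α) * (m / M) := by
        rw [← add_div, ← mul_add, hsum]
        field_simp [hn.Mpos.ne', hI'.ne']
      linarith [this]
    nlinarith [hdiff, sub_nonneg.mpr hαβ, sub_nonneg.mpr (div_le_one_of_le₀ hn.mM hn.Mpos.le)]
  · have hdiff : (β - m * s' / (M * I')) - (α + m * s / (M * I'))
        = (β - α) * (1 - m / M) := by
      have : m * s / (M * I') + m * s' / (M * I') = (β - α) * (m / M) := by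
        rw [← add_div, ← mul_add, hsum]
        field_simp [hn.Mpos.ne', hI'.ne']
      linarith [this]
    have hα₁ : α ≤ α + m * s / (M * I') := by
      nlinarith [div_nonneg (mul_nonneg hn.mpos.le hs) hMI'.le]
    nlinarith [mul_nonneg (sub_nonneg.mpr hαβ) (sub_nonneg.mpr (div_le_one_of_le₀ hn.mM hn.Mpos.le))]
  · intro x
    have hF'le : Fi fe g' x ≤ M * I' := hn.F_le hg' hg'nn x
    have hd1 : 0 ≤ m * s / (M * I') := div_nonneg (mul_nonneg hn.mpos.le hs) hMI'.le
    have hd2 : 0 ≤ m * s' / (M * I') := div_nonneg (mul_nonneg hn.mpos.le hs') hMI'.le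
    have hc1 : m * s / (M * I') * Fi fe g' x ≤ m * s := by
      calc m * s / (M * I') * Fi fe g' x ≤ m * s / (M * I') * (M * I') :=
            mul_le_mul_of_nonneg_left hF'le hd1
        _ = m * s := div_mul_cancel₀ _ hMI'.ne'
    have hc2 : m * s' / (M * I') * Fi fe g' x ≤ m * s' := by
      calc m * s' / (M * I') * Fi fe g' x ≤ m * s' / (M * I') * (M * I') :=
            mul_le_mul_of_nonneg_left hF'le hd2
        _ = m * s' := div_mul_cancel₀ _ hMI'.ne'
    have expand1 : (α + m * s / (M * I')) * Fi fe g' x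
        = α * Fi fe g' x + m * s / (M * I') * Fi fe g' x := by ring
    have expand2 : (β - m * s' / (M * I')) * Fi fe g' x
        = β * Fi fe g' x - m * s' / (M * I') * Fi fe g' x := by ring
    constructor
    · rw [expand1]
      exact (add_le_add (le_refl (α * Fi fe g' x)) hc1).trans (hlow x)
    · rw [expand2]
      exact (hupp x).trans (sub_le_sub_left hc2 _)


lemma rseq_one_le (hθ0 : 0 ≤ θ) (hρ : 1 ≤ ρ₀) : ∀ t, 1 ≤ rseq θ ρ₀ t := by
  intro t
  induction t with
  | zero => exact hρ
  | succ t ih =>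
    rw [rseq]
    rw [Real.one_le_sqrt]
    nlinarith [mul_nonneg (mul_nonneg hθ0 (by linarith : (0:ℝ) ≤ rseq θ ρ₀ t - 1))
      (by linarith : (0:ℝ) ≤ rseq θ ρ₀ t)]
lemma rseq_antitone (hθ0 : 0 ≤ θ) (hθ1 : θ ≤ 1) (hρ : 1 ≤ ρ₀) :
    ∀ t, rseq θ ρ₀ (t+1) ≤ rseq θ ρ₀ t := by
  intro t
  have h1 := rseq_one_le hθ0 hρ t
  rw [rseq]
  have hle : rseq θ ρ₀ t * (1 + θ * (rseq θ ρ₀ t - 1)) ≤ (rseq θ ρ₀ t)^2 := by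
    nlinarith [mul_nonneg (mul_nonneg (by linarith : (0:ℝ) ≤ rseq θ ρ₀ t)
      (by linarith : (0:ℝ) ≤ rseq θ ρ₀ t - 1)) (by linarith : (0:ℝ) ≤ 1 - θ)]
  calc Real.sqrt (rseq θ ρ₀ t * (1 + θ * (rseq θ ρ₀ t - 1)))
      ≤ Real.sqrt ((rseq θ ρ₀ t)^2) := Real.sqrt_le_sqrt hle
    _ = rseq θ ρ₀ t := Real.sqrt_sq (by linarith)
lemma rseq_tendsto (hθ0 : 0 ≤ θ) (hθ1 : θ < 1) (hρ : 1 ≤ ρ₀) :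
    Tendsto (rseq θ ρ₀) atTop (nhds 1) := by
  have hanti : Antitone (rseq θ ρ₀) :=
    antitone_nat_of_succ_le (rseq_antitone hθ0 hθ1.le hρ)
  have hbdd : BddBelow (Set.range (rseq θ ρ₀)) :=
    ⟨1, by rintro x ⟨t, rfl⟩; exact rseq_one_le hθ0 hρ t⟩
  have hlim := tendsto_atTop_ciInf hanti hbdd
  set L := ⨅ t, rseq θ ρ₀ t with hL
  have hL1 : 1 ≤ L := le_ciInf (fun t => rseq_one_le hθ0 hρ t)
  -- L is a fixed point
  have hcont : Continuous (fun ρ : ℝ => Real.sqrt (ρ * (1 + θ * (ρ - 1)))) := by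
    exact Real.continuous_sqrt.comp (by continuity)
  have h2 : Tendsto (fun t => rseq θ ρ₀ (t+1)) atTop (nhds L) :=
    hlim.comp (tendsto_add_atTop_nat 1)
  have h3 : Tendsto (fun t => Real.sqrt (rseq θ ρ₀ t * (1 + θ * (rseq θ ρ₀ t - 1))))
      atTop (nhds (Real.sqrt (L * (1 + θ * (L - 1))))) :=
    (hcont.tendsto L).comp hlim
  have hfix : L = Real.sqrt (L * (1 + θ * (L - 1))) := by
    apply tendsto_nhds_unique h2
    exact h3.congr (fun t => by rw [rseq])
  have hX : 0 ≤ L * (1 + θ * (L - 1)) := by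
    nlinarith [mul_nonneg (mul_nonneg hθ0 (by linarith : (0:ℝ) ≤ L - 1))
      (by linarith : (0:ℝ) ≤ L)]
  have hsq : L^2 = L * (1 + θ * (L - 1)) := by
    conv_lhs => rw [hfix]
    exact Real.sq_sqrt hX
  have hz : (1 - θ) * (L * (L - 1)) = 0 := by linear_combination hsq
  have hLeq : L = 1 := by
    rcases mul_eq_zero.mp hz with h | h
    · linarith
    · rcases mul_eq_zero.mp h with h' | h' <;> linarith
  rwa [hLeq] at hlim

lemma Ge_succ (t : ℕ) (x : ℝ) :
    Ge fe (t+1) x = Real.sqrt (Ge fe t x / Fi fe (Ge fe t) x) := rfl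

/-- one step of the iteration keeps good bounds -/
lemma Nice.step (hn : Nice fe m M) {u : ℝ → ℝ} (hu : Continuous u) {a b : ℝ}
    (ha : 0 < a) (hab : b ≤ (M/m) * a) (hbd : ∀ x, a ≤ u x ∧ u x ≤ b) :
    Continuous (fun x => Real.sqrt (u x / Fi fe u x)) ∧
    ∃ a' b', 0 < a' ∧ b' ≤ (M/m) * a' ∧
      (∀ x, a' ≤ Real.sqrt (u x / Fi fe u x) ∧ Real.sqrt (u x / Fi fe u x) ≤ b') ∧
      Real.sqrt (m / (M*M)) ≤ a' ∧ b' ≤ Real.sqrt (M / (m*m)) := by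
  have hm := hn.mpos
  have hM := hn.Mpos
  have hmM := hn.mM
  have hunn : ∀ y ∈ Set.Icc (0:ℝ) 1, 0 ≤ u y := fun y _ => ha.le.trans (hbd y).1
  set I : ℝ := ∫ y in (0:ℝ)..1, u y with hI
  have hIa : a ≤ I := int_ge hu.continuousOn (fun y _ => (hbd y).1)
  have hIb : I ≤ b := int_le hu.continuousOn (fun y _ => (hbd y).2)
  have hIpos : 0 < I := lt_of_lt_of_le ha hIa
  have hFge : ∀ x, m * I ≤ Fi fe u x := hn.F_ge hu.continuousOn hunn
  have hFle : ∀ x, Fi fe u x ≤ M * I := hn.F_le hu.continuousOn hunn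
  have hFpos : ∀ x, 0 < Fi fe u x := fun x => lt_of_lt_of_le (by positivity) (hFge x)
  have hcont : Continuous (fun x => Real.sqrt (u x / Fi fe u x)) :=
    Real.continuous_sqrt.comp (hu.div (hn.contF hu) (fun x => (hFpos x).ne'))
  refine ⟨hcont, Real.sqrt (a / (M * I)), Real.sqrt (b / (m * I)), ?_, ?_, ?_, ?_, ?_⟩
  · positivity
  · -- b' ≤ K a'
    have hbm : b * m ≤ M * a := by
      calc b * m ≤ (M/m*a) * m := mul_le_mul_of_nonneg_right hab hm.le
        _ = M * a := by field_simp
    have h1 : b / (m * I) ≤ (M/m)^2 * (a / (M * I)) := by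
      rw [show (M/m)^2 * (a / (M*I)) = (M * a) / (m^2 * I) by
        field_simp]
      rw [div_le_div_iff₀ (by positivity) (by positivity)]
      nlinarith [mul_le_mul_of_nonneg_right hbm (mul_nonneg hm.le hIpos.le)]
    have h2 : (M/m) * Real.sqrt (a/(M*I)) = Real.sqrt ((M/m)^2 * (a/(M*I))) := by
      rw [Real.sqrt_mul (by positivity), Real.sqrt_sq (by positivity)]
    rw [h2]
    exact Real.sqrt_le_sqrt h1
  · intro x
    constructor
    · apply Real.sqrt_le_sqrt
      exact div_le_div₀ (ha.le.trans (hbd x).1) (hbd x).1 (hFpos x) (hFle x)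
    · apply Real.sqrt_le_sqrt
      exact div_le_div₀ (ha.le.trans ((hbd 0).1.trans (hbd 0).2)) (hbd x).2
        (by positivity) (hFge x)
  · apply Real.sqrt_le_sqrt
    rw [div_le_div_iff₀ (by positivity) (by positivity)]
    -- m * (M*I) ≤ a * (M*M):  M*I ≤ M*(M/m)*a so m*(M*I) ≤ M*M*a
    have : I ≤ (M/m)*a := le_trans hIb hab
    calc m * (M * I) ≤ m * (M * ((M/m)*a)) := by
          apply mul_le_mul_of_nonneg_left ?_ hm.le
          exact mul_le_mul_of_nonneg_left this hM.le
      _ = a * (M*M) := by field_simp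
  · apply Real.sqrt_le_sqrt
    rw [div_le_div_iff₀ (by positivity) (by positivity)]
    -- b * (m*m) ≤ M * (m * I)
    have hbm : b * m ≤ M * a := by
      calc b * m ≤ (M/m*a) * m := mul_le_mul_of_nonneg_right hab hm.le
        _ = M * a := by field_simp
    nlinarith [mul_le_mul_of_nonneg_right hbm hm.le,
      mul_le_mul_of_nonneg_left hIa (mul_nonneg hM.le hm.le)]


lemma Ge_succ' (t : ℕ) (x : ℝ) :
    Ge fe (t+1) x = Real.sqrt (Ge fe t x / Fi fe (Ge fe t) x) := rfl

lemma Nice.Fpos (hn : Nice fe m M) {g : ℝ → ℝ} (hg : ContinuousOn g (Set.Icc 0 1))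
    {a : ℝ} (ha : 0 < a) (hbd : ∀ x ∈ Set.Icc (0:ℝ) 1, a ≤ g x) (x : ℝ) :
    0 < Fi fe g x := by
  have h1 : a ≤ ∫ y in (0:ℝ)..1, g y := int_ge hg hbd
  have := hn.F_ge hg (fun y hy => le_trans ha.le (hbd y hy)) x
  nlinarith [hn.mpos]

lemma Nice.iter (hn : Nice fe m M) : ∀ t, Continuous (Ge fe t) ∧
    ∃ a b : ℝ, 0 < a ∧ b ≤ (M/m) * a ∧ ∀ x, a ≤ Ge fe t x ∧ Ge fe t x ≤ b := by
  intro t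
  induction t with
  | zero =>
    refine ⟨continuous_const, 1, 1, one_pos, ?_, fun x => ⟨le_refl _, le_refl _⟩⟩
    rw [mul_one]
    exact (one_le_div hn.mpos).mpr hn.mM
  | succ t ih =>
    obtain ⟨hc, a, b, ha, hab, hbd⟩ := ih
    obtain ⟨hc', a', b', h1, h2, h3, _, _⟩ := hn.step hc ha hab hbd
    exact ⟨hc', a', b', h1, h2, h3⟩

lemma Nice.iterAB (hn : Nice fe m M) (t : ℕ) (x : ℝ) :
    Real.sqrt (m/(M*M)) ≤ Ge fe (t+1) x ∧ Ge fe (t+1) x ≤ Real.sqrt (M/(m*m)) := by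
  obtain ⟨hc, a, b, ha, hab, hbd⟩ := hn.iter t
  obtain ⟨hc', a', b', h1, h2, h3, hA, hB⟩ := hn.step hc ha hab hbd
  exact ⟨le_trans hA (h3 x).1, le_trans (h3 x).2 hB⟩

/-- The pairwise ratio-contraction induction. -/
lemma Nice.pair (hn : Nice fe m M) (p : ℕ) : ∀ t : ℕ,
    ∃ α β : ℝ, 0 < α ∧ α ≤ 1 ∧ 1 ≤ β ∧ β ≤ α * rseq (1 - m/M) ((M/m)^3) t ∧
    ∀ x ∈ Set.Icc (0:ℝ) 1,
      α * Ge fe (1+t) x ≤ Ge fe (1+t+p) x ∧ Ge fe (1+t+p) x ≤ β * Ge fe (1+t) x := by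
  have hm := hn.mpos
  have hM := hn.Mpos
  have hmM := hn.mM
  set A : ℝ := Real.sqrt (m/(M*M)) with hAdef
  set B : ℝ := Real.sqrt (M/(m*m)) with hBdef
  have hApos : 0 < A := Real.sqrt_pos.mpr (by positivity)
  have hBpos : 0 < B := Real.sqrt_pos.mpr (by positivity)
  have hA2 : A * A = m/(M*M) := Real.mul_self_sqrt (by positivity)
  have hB2 : B * B = M/(m*m) := Real.mul_self_sqrt (by positivity)
  have hAB : A ≤ B := by
    rw [hAdef, hBdef]
    apply Real.sqrt_le_sqrt
    rw [div_le_div_iff₀ (by positivity) (by positivity)]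
    have h1 : m*m ≤ M*M := mul_le_mul hmM hmM hm.le hM.le
    exact mul_le_mul hmM h1 (by positivity) hM.le
  intro t
  induction t with
  | zero =>
    refine ⟨A/B, B/A, by positivity, ?_, ?_, ?_, ?_⟩
    · exact div_le_one_of_le₀ hAB hBpos.le
    · exact (one_le_div hApos).mpr hAB
    · -- B/A ≤ (A/B) * (M/m)^3
      show B/A ≤ A/B * rseq _ _ 0
      rw [rseq, div_mul_eq_mul_div, div_le_div_iff₀ hApos hBpos]
      have : A * (M/m)^3 * A = (A*A) * (M/m)^3 := by ring
      rw [this, hA2, hB2]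
      have heq : (m/(M*M)) * (M/m)^3 = M/(m*m) := by field_simp
      exact le_of_eq heq.symm
    · intro x _
      constructor
      · calc A/B * Ge fe (1+0) x ≤ A/B * B := by
              apply mul_le_mul_of_nonneg_left ?_ (by positivity)
              exact (hn.iterAB 0 x).2
          _ = A := div_mul_cancel₀ A hBpos.ne'
          _ ≤ Ge fe (1+0+p) x := by
              have := (hn.iterAB p x).1
              rwa [show p + 1 = 1 + 0 + p by omega] at this
      · calc Ge fe (1+0+p) x ≤ B := by
              have := (hn.iterAB p x).2
              rwa [show p + 1 = 1 + 0 + p by omega] at this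
          _ = B/A * A := (div_mul_cancel₀ B hApos.ne').symm
          _ ≤ B/A * Ge fe (1+0) x := by
              apply mul_le_mul_of_nonneg_left ?_ (by positivity)
              exact (hn.iterAB 0 x).1
  | succ t ih =>
    obtain ⟨α, β, hαpos, hα1, hβ1, hβr, hbd⟩ := ih
    set r : ℝ := rseq (1 - m/M) ((M/m)^3) t with hrdef
    have hr1 : 1 ≤ r := rseq_one_le (by
      have : m/M ≤ 1 := div_le_one_of_le₀ hmM hM.le
      linarith) (one_le_pow₀ ((one_le_div hm).mpr hmM)) t
    have hθ0 : (0:ℝ) ≤ 1 - m/M := by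
      have : m/M ≤ 1 := div_le_one_of_le₀ hmM hM.le
      linarith
    -- data about the two iterates
    obtain ⟨hcu, au, bu, hau, habu, hbdu⟩ := hn.iter (1+t)
    obtain ⟨hcv, av, bv, hav, habv, hbdv⟩ := hn.iter (1+t+p)
    have hg'pos : ∀ y ∈ Set.Icc (0:ℝ) 1, 0 < Ge fe (1+t) y :=
      fun y _ => lt_of_lt_of_le hau (hbdu y).1
    obtain ⟨α₁, β₁, hαα₁, hβ₁β, hα₁β₁, hkeyA, hF⟩ :=
      hn.lemA hcv.continuousOn hcu.continuousOn hg'pos hαpos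
        (fun y hy => (hbd y hy).1) (fun y hy => (hbd y hy).2)
    have hα₁pos : 0 < α₁ := lt_of_lt_of_le hαpos hαα₁
    have hβ₁pos : 0 < β₁ := lt_of_lt_of_le hα₁pos hα₁β₁
    have hβpos : (0:ℝ) < β := lt_of_lt_of_le one_pos hβ1
    have hFu_pos : ∀ x, 0 < Fi fe (Ge fe (1+t)) x :=
      hn.Fpos hcu.continuousOn hau (fun y _ => (hbdu y).1)
    have hFv_pos : ∀ x, 0 < Fi fe (Ge fe (1+t+p)) x :=
      hn.Fpos hcv.continuousOn hav (fun y _ => (hbdv y).1)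
    refine ⟨Real.sqrt (α/β₁), Real.sqrt (β/α₁), by positivity, ?_, ?_, ?_, ?_⟩
    · rw [Real.sqrt_le_one]
      exact div_le_one_of_le₀ (le_trans hαα₁ hα₁β₁) hβ₁pos.le
    · rw [Real.one_le_sqrt]
      exact (one_le_div hα₁pos).mpr (le_trans hα₁β₁ hβ₁β)
    · -- the ratio contraction
      show Real.sqrt (β/α₁) ≤ Real.sqrt (α/β₁) * rseq _ _ (t+1)
      rw [rseq, ← hrdef]
      rw [← Real.sqrt_mul (by positivity)]
      apply Real.sqrt_le_sqrt
      rw [div_mul_eq_mul_div, div_le_div_iff₀ hα₁pos hβ₁pos]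
      -- β * β₁ ≤ α * (r * (1 + θ(r-1))) * α₁
      have s1 : β*β₁ ≤ (α*r)*β₁ := mul_le_mul_of_nonneg_right hβr hβ₁pos.le
      have e1 : (α*r)*β₁ = r*(α*β₁) := by ring
      have s3 : r*(α*β₁) ≤ r*(α₁*(α+(1-m/M)*(β-α))) :=
        mul_le_mul_of_nonneg_left hkeyA (by linarith)
      have s4 : α₁*(α+(1-m/M)*(β-α)) ≤ α₁*(α+(1-m/M)*(α*r-α)) := by
        apply mul_le_mul_of_nonneg_left ?_ hα₁pos.le
        have h := mul_le_mul_of_nonneg_left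
          (show β - α ≤ α*r - α by linarith [hβr]) hθ0
        linarith
      have s5 : r*(α₁*(α+(1-m/M)*(β-α))) ≤ r*(α₁*(α+(1-m/M)*(α*r-α))) :=
        mul_le_mul_of_nonneg_left s4 (by linarith)
      have e2 : r*(α₁*(α+(1-m/M)*(α*r-α))) = α*(r*(1+(1-m/M)*(r-1)))*α₁ := by ring
      linarith
    · intro x hx
      have e1 : 1+(t+1) = (1+t)+1 := by omega
      have e2 : 1+(t+1)+p = (1+t+p)+1 := by omega
      rw [e2, e1, Ge_succ', Ge_succ']
      have hv0 : 0 ≤ Ge fe (1+t+p) x := hav.le.trans (hbdv x).1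
      have hu0 : 0 ≤ Ge fe (1+t) x := hau.le.trans (hbdu x).1
      constructor
      · rw [← Real.sqrt_mul (div_nonneg hαpos.le hβ₁pos.le)]
        apply Real.sqrt_le_sqrt
        rw [div_mul_div_comm]
        exact div_le_div₀ hv0 (hbd x hx).1 (hFv_pos x) (hF x).2
      · rw [← Real.sqrt_mul (div_nonneg hβpos.le hα₁pos.le)]
        apply Real.sqrt_le_sqrt
        rw [div_mul_div_comm]
        exact div_le_div₀ (mul_nonneg hβpos.le hu0) (hbd x hx).2
          (mul_pos hα₁pos (hFu_pos x)) (hF x).1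


lemma Ge_succ'' (t : ℕ) (x : ℝ) :
    Ge fe (t+1) x = Real.sqrt (Ge fe t x / Fi fe (Ge fe t) x) := rfl

lemma Nice.hθ0 (hn : Nice fe m M) : (0:ℝ) ≤ 1 - m/M := by
  have : m/M ≤ 1 := div_le_one_of_le₀ hn.mM hn.Mpos.le
  linarith
lemma Nice.hθ1 (hn : Nice fe m M) : (1:ℝ) - m/M < 1 := by
  have : 0 < m/M := div_pos hn.mpos hn.Mpos
  linarith
lemma Nice.hρ₀ (hn : Nice fe m M) : (1:ℝ) ≤ (M/m)^3 :=
  one_le_pow₀ ((one_le_div hn.mpos).mpr hn.mM)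

lemma Nice.cauchy_bound (hn : Nice fe m M) (t p : ℕ) (x : ℝ) (hx : x ∈ Set.Icc (0:ℝ) 1) :
    |Ge fe (1+t+p) x - Ge fe (1+t) x|
      ≤ (rseq (1 - m/M) ((M/m)^3) t - 1) * Real.sqrt (M/(m*m)) := by
  obtain ⟨α, β, hαpos, hα1, hβ1, hβr, hbd⟩ := hn.pair p t
  set r : ℝ := rseq (1 - m/M) ((M/m)^3) t with hr
  have hr1 : 1 ≤ r := rseq_one_le hn.hθ0 hn.hρ₀ t
  set B : ℝ := Real.sqrt (M/(m*m)) with hB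
  have hu := hn.iterAB t x
  have hu0 : 0 ≤ Ge fe (1+t) x := by
    have := (hu).1
    have hA0 : 0 ≤ Real.sqrt (m/(M*M)) := Real.sqrt_nonneg _
    rw [show t + 1 = 1 + t by omega] at this
    linarith
  have huB : Ge fe (1+t) x ≤ B := by
    have := (hu).2
    rwa [show t + 1 = 1 + t by omega] at this
  have hαr : 1 ≤ α * r := le_trans hβ1 hβr
  have h1 : 1 - α ≤ r - 1 := by nlinarith [mul_nonneg (by linarith : (0:ℝ) ≤ 1 - α) (by linarith : (0:ℝ) ≤ r - 1)]
  have h2 : β - 1 ≤ r - 1 := by nlinarith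
  rw [abs_le]
  constructor
  · -- -(r-1)B ≤ v - u,  i.e.  u - v ≤ (1-α)u ≤ (r-1)B
    have := (hbd x hx).1
    have h3 : Ge fe (1+t) x - Ge fe (1+t+p) x ≤ (1-α) * Ge fe (1+t) x := by nlinarith
    have h4 : (1-α) * Ge fe (1+t) x ≤ (r-1) * B := by
      apply mul_le_mul h1 huB hu0 (by linarith)
    linarith
  · have := (hbd x hx).2
    have h3 : Ge fe (1+t+p) x - Ge fe (1+t) x ≤ (β-1) * Ge fe (1+t) x := by nlinarith
    have h4 : (β-1) * Ge fe (1+t) x ≤ (r-1) * B := by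
      apply mul_le_mul h2 huB hu0 (by linarith)
    linarith

/-- Existence of the limit with all needed properties. -/
lemma Nice.limit (hn : Nice fe m M) :
    ∃ H : ℝ → ℝ, ContinuousOn H (Set.Icc 0 1) ∧
      (∀ x ∈ Set.Icc (0:ℝ) 1, Real.sqrt (m/(M*M)) ≤ H x ∧ H x ≤ Real.sqrt (M/(m*m))) ∧
      (∀ x ∈ Set.Icc (0:ℝ) 1, H x * Fi fe H x = 1) ∧
      (∀ δ : ℝ, 0 < δ → ∃ N : ℕ, ∀ t ≥ N, ∀ x ∈ Set.Icc (0:ℝ) 1, |Ge fe t x - H x| < δ) := by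
  classical
  have hm := hn.mpos
  have hM := hn.Mpos
  set A : ℝ := Real.sqrt (m/(M*M)) with hA
  set B : ℝ := Real.sqrt (M/(m*m)) with hB
  have hApos : 0 < A := Real.sqrt_pos.mpr (by positivity)
  have hBpos : 0 < B := Real.sqrt_pos.mpr (by positivity)
  set ε : ℕ → ℝ := fun t => (rseq (1 - m/M) ((M/m)^3) t - 1) * B with hε
  have hε0 : ∀ t, 0 ≤ ε t := fun t =>
    mul_nonneg (by linarith [rseq_one_le hn.hθ0 hn.hρ₀ t]) hBpos.le
  have hεanti : ∀ N t, N ≤ t → ε t ≤ ε N := by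
    have hmono : Antitone (rseq (1 - m/M) ((M/m)^3)) :=
      antitone_nat_of_succ_le (rseq_antitone hn.hθ0 (by linarith [hn.hθ1]) hn.hρ₀)
    intro N t h
    exact mul_le_mul_of_nonneg_right (by linarith [hmono h]) hBpos.le
  have hεlim : Tendsto ε atTop (nhds 0) := by
    have h1 := rseq_tendsto hn.hθ0 hn.hθ1 hn.hρ₀
    have h2 : Tendsto (fun t => (rseq (1 - m/M) ((M/m)^3) t - 1) * B) atTop
        (nhds ((1 - 1) * B)) := (h1.sub_const 1).mul_const B
    simpa using h2
  -- Cauchy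
  have hdist : ∀ x ∈ Set.Icc (0:ℝ) 1, ∀ N n p : ℕ, N ≤ n →
      dist (Ge fe (1+n) x) (Ge fe (1+(n+p)) x) ≤ ε N := by
    intro x hx N n p hN
    rw [Real.dist_eq, abs_sub_comm, show 1+(n+p) = 1+n+p by omega]
    exact le_trans (hn.cauchy_bound n p x hx) (hεanti N n hN)
  have hcauchy : ∀ x ∈ Set.Icc (0:ℝ) 1, CauchySeq (fun t => Ge fe (1+t) x) := by
    intro x hx
    apply cauchySeq_of_le_tendsto_0 ε ?_ hεlim
    intro n mm N hn' hm
    rcases le_total n mm with h | h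
    · obtain ⟨p, rfl⟩ := Nat.exists_eq_add_of_le h
      exact hdist x hx N n p hn'
    · obtain ⟨p, rfl⟩ := Nat.exists_eq_add_of_le h
      rw [dist_comm]
      exact hdist x hx N mm p hm
  set H : ℝ → ℝ := fun x => limUnder atTop (fun t => Ge fe (1+t) x) with hH
  have hHlim : ∀ x ∈ Set.Icc (0:ℝ) 1, Tendsto (fun t => Ge fe (1+t) x) atTop (nhds (H x)) :=
    fun x hx => (hcauchy x hx).tendsto_limUnder
  have hclose : ∀ t : ℕ, ∀ x ∈ Set.Icc (0:ℝ) 1, |Ge fe (1+t) x - H x| ≤ ε t := by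
    intro t x hx
    have h2 : Tendsto (fun p => |Ge fe (1+t) x - Ge fe (1+(p+t)) x|) atTop
        (nhds |Ge fe (1+t) x - H x|) := by
      have h3 : Tendsto (fun p => Ge fe (1+(p+t)) x) atTop (nhds (H x)) :=
        (hHlim x hx).comp (tendsto_add_atTop_nat t)
      exact ((tendsto_const_nhds.sub h3).abs)
    apply le_of_tendsto h2
    filter_upwards with p
    rw [show 1+(p+t) = 1+t+p by omega]
    rw [abs_sub_comm]
    exact hn.cauchy_bound t p x hx
  have hbounds : ∀ x ∈ Set.Icc (0:ℝ) 1, A ≤ H x ∧ H x ≤ B := by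
    intro x hx
    constructor
    · apply ge_of_tendsto (hHlim x hx)
      filter_upwards with t
      have := (hn.iterAB t x).1
      rwa [show t+1 = 1+t by omega] at this
    · apply le_of_tendsto (hHlim x hx)
      filter_upwards with t
      have := (hn.iterAB t x).2
      rwa [show t+1 = 1+t by omega] at this
  have hHpos : ∀ x ∈ Set.Icc (0:ℝ) 1, 0 < H x :=
    fun x hx => lt_of_lt_of_le hApos (hbounds x hx).1
  -- uniform convergence statement
  have huc : ∀ δ : ℝ, 0 < δ → ∃ N : ℕ, ∀ t ≥ N, ∀ x ∈ Set.Icc (0:ℝ) 1,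
      |Ge fe t x - H x| < δ := by
    intro δ hδ
    obtain ⟨N, hN⟩ := (hεlim.eventually (gt_mem_nhds hδ)).exists_forall_of_atTop
    refine ⟨N+1, fun t ht x hx => ?_⟩
    have ht1 : 1 ≤ t := by omega
    obtain ⟨s, rfl⟩ := Nat.exists_eq_add_of_le ht1
    calc |Ge fe (1+s) x - H x| ≤ ε s := hclose s x hx
      _ ≤ ε N := hεanti N s (by omega)
      _ < δ := hN N le_rfl
  -- continuity of H on the interval
  have hHcont : ContinuousOn H (Set.Icc 0 1) := by
    have huc2 : TendstoUniformlyOn (fun t x => Ge fe (1+t) x) H atTop (Set.Icc 0 1) := by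
      rw [Metric.tendstoUniformlyOn_iff]
      intro δ hδ
      obtain ⟨N, hN⟩ := huc δ hδ
      filter_upwards [eventually_ge_atTop N] with t ht x hx
      rw [dist_comm, Real.dist_eq]
      exact hN (1+t) (by omega) x hx
    exact huc2.continuousOn (Filter.Eventually.frequently (by
      filter_upwards with t
      exact (hn.iter (1+t)).1.continuousOn))
  -- fixed point property
  have hfix : ∀ x ∈ Set.Icc (0:ℝ) 1, H x * Fi fe H x = 1 := by
    intro x hx
    have hFHpos : 0 < Fi fe H x :=
      hn.Fpos hHcont hApos (fun y hy => (hbounds y hy).1) x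
    -- convergence of Fi applied to iterates
    have hFconv : Tendsto (fun t => Fi fe (Ge fe (1+t)) x) atTop (nhds (Fi fe H x)) := by
      rw [tendsto_iff_dist_tendsto_zero]
      apply squeeze_zero (fun t => dist_nonneg) ?_ (by
        have h2 : Tendsto (fun t => M * ε t) atTop (nhds (M * 0)) := hεlim.const_mul M
        simpa using h2)
      intro t
      have hGcont : ContinuousOn (Ge fe (1+t)) (Set.Icc 0 1) := (hn.iter (1+t)).1.continuousOn
      have hwcont : ContinuousOn (fun y => Ge fe (1+t) y - H y) (Set.Icc 0 1) :=
        hGcont.sub hHcont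
      have e1 : Fi fe (Ge fe (1+t)) x - Fi fe H x
          = ∫ y in (0:ℝ)..1, fe x y * (Ge fe (1+t) y - H y) := by
        rw [Fi, Fi, ← intervalIntegral.integral_sub (hn.integ hGcont x) (hn.integ hHcont x)]
        congr 1; ext y; ring
      rw [Real.dist_eq, e1]
      have e2 : |∫ y in (0:ℝ)..1, fe x y * (Ge fe (1+t) y - H y)|
          ≤ ∫ y in (0:ℝ)..1, |fe x y * (Ge fe (1+t) y - H y)| :=
        intervalIntegral.abs_integral_le_integral_abs zero_le_one
      have e3 : (∫ y in (0:ℝ)..1, |fe x y * (Ge fe (1+t) y - H y)|) ≤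
          ∫ y in (0:ℝ)..1, M * ε t := by
        apply intervalIntegral.integral_mono_on zero_le_one
          ((hn.integ hwcont x).abs) (by simp)
        intro y hy
        rw [abs_mul]
        apply mul_le_mul
        · rw [abs_of_pos (lt_of_lt_of_le hn.mpos (hn.lb x y))]; exact hn.ub x y
        · rw [abs_sub_comm] at *
          have := hclose t y hy
          rwa [abs_sub_comm]
        · exact abs_nonneg _
        · exact le_trans hn.mpos.le (hn.ub 0 0 |> fun h => le_trans (hn.lb 0 0) h)
      have e4 : (∫ y in (0:ℝ)..1, M * ε t) = M * ε t := by simp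
      linarith [e2, e3, e4 ▸ e3]
    have hGlim : Tendsto (fun t => Ge fe (1+t+1) x) atTop (nhds (H x)) := by
      have := (hHlim x hx).comp (tendsto_add_atTop_nat 1)
      refine this.congr (fun t => ?_)
      simp only [Function.comp_apply]
      rw [show 1+(t+1) = 1+t+1 by omega]
    have hRlim : Tendsto (fun t => Real.sqrt (Ge fe (1+t) x / Fi fe (Ge fe (1+t)) x)) atTop
        (nhds (Real.sqrt (H x / Fi fe H x))) := by
      apply (Real.continuous_sqrt.continuousAt).tendsto.comp
      exact (hHlim x hx).div hFconv hFHpos.ne'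
    have hfixeq : H x = Real.sqrt (H x / Fi fe H x) := by
      apply tendsto_nhds_unique hGlim
      exact hRlim.congr (fun t => (Ge_succ'' (1+t) x).symm)
    have hnng : 0 ≤ H x / Fi fe H x := div_nonneg (hHpos x hx).le hFHpos.le
    have hsq : (H x)^2 = H x / Fi fe H x := by
      conv_lhs => rw [hfixeq]
      exact Real.sq_sqrt hnng
    have e : (H x)^2 * Fi fe H x = H x := by
      rw [hsq]; field_simp
    have e2 : H x * (H x * Fi fe H x - 1) = 0 := by linear_combination e
    rcases mul_eq_zero.mp e2 with h | h
    · exact absurd h (hHpos x hx).ne'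
    · linarith
  exact ⟨H, hHcont, hbounds, hfix, huc⟩


/-- Uniqueness of the positive continuous balancing function. -/
lemma Nice.unique (hn : Nice fe m M) {H h' : ℝ → ℝ}
    (hHc : ContinuousOn H (Set.Icc 0 1)) (hHpos : ∀ x ∈ Set.Icc (0:ℝ) 1, 0 < H x)
    (hHbal : ∀ x ∈ Set.Icc (0:ℝ) 1, H x * Fi fe H x = 1)
    (hh'c : ContinuousOn h' (Set.Icc 0 1)) (hh'pos : ∀ x ∈ Set.Icc (0:ℝ) 1, 0 < h' x)
    (hh'bal : ∀ x ∈ Set.Icc (0:ℝ) 1, h' x * Fi fe h' x = 1) :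
    ∀ x ∈ Set.Icc (0:ℝ) 1, h' x = H x := by
  have hm := hn.mpos
  have hM := hn.Mpos
  -- min and max of the ratio
  have hqc : ContinuousOn (fun x => h' x / H x) (Set.Icc 0 1) :=
    hh'c.div hHc (fun x hx => (hHpos x hx).ne')
  have hne : (Set.Icc (0:ℝ) 1).Nonempty := ⟨0, by norm_num⟩
  obtain ⟨x₀, hx₀, hmin'⟩ := isCompact_Icc.exists_isMinOn hne hqc
  obtain ⟨x₁, hx₁, hmax'⟩ := isCompact_Icc.exists_isMaxOn hne hqc
  have hmin : ∀ y ∈ Set.Icc (0:ℝ) 1, h' x₀ / H x₀ ≤ h' y / H y := fun y hy => hmin' hy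
  have hmax : ∀ y ∈ Set.Icc (0:ℝ) 1, h' y / H y ≤ h' x₁ / H x₁ := fun y hy => hmax' hy
  set α : ℝ := h' x₀ / H x₀ with hαdef
  set β : ℝ := h' x₁ / H x₁ with hβdef
  have hαpos : 0 < α := div_pos (hh'pos x₀ hx₀) (hHpos x₀ hx₀)
  have hβpos : 0 < β := div_pos (hh'pos x₁ hx₁) (hHpos x₁ hx₁)
  have hαβ : α ≤ β := hmin x₁ hx₁
  have hl : ∀ y ∈ Set.Icc (0:ℝ) 1, α * H y ≤ h' y := by
    intro y hy
    have := hmin y hy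
    calc α * H y ≤ (h' y / H y) * H y :=
          mul_le_mul_of_nonneg_right this (hHpos y hy).le
      _ = h' y := div_mul_cancel₀ _ (hHpos y hy).ne'
  have hu : ∀ y ∈ Set.Icc (0:ℝ) 1, h' y ≤ β * H y := by
    intro y hy
    have := hmax y hy
    calc h' y = (h' y / H y) * H y := (div_mul_cancel₀ _ (hHpos y hy).ne').symm
      _ ≤ β * H y := mul_le_mul_of_nonneg_right this (hHpos y hy).le
  obtain ⟨α₁, β₁, hαα₁, hβ₁β, hα₁β₁, hkeyA, hF⟩ :=
    hn.lemA hh'c hHc hHpos hαpos hl hu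
  have hα₁pos : 0 < α₁ := lt_of_lt_of_le hαpos hαα₁
  have hβ₁pos : 0 < β₁ := lt_of_lt_of_le hα₁pos hα₁β₁
  -- the Fi values
  have hFH : ∀ x ∈ Set.Icc (0:ℝ) 1, Fi fe H x = 1 / H x := by
    intro x hx
    rw [eq_div_iff (hHpos x hx).ne']
    linear_combination hHbal x hx
  have hFh' : ∀ x ∈ Set.Icc (0:ℝ) 1, Fi fe h' x = 1 / h' x := by
    intro x hx
    rw [eq_div_iff (hh'pos x hx).ne']
    linear_combination hh'bal x hx
  have hFHpos : ∀ x ∈ Set.Icc (0:ℝ) 1, 0 < Fi fe H x := by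
    intro x hx; rw [hFH x hx]; exact one_div_pos.mpr (hHpos x hx)
  have hFh'pos : ∀ x ∈ Set.Icc (0:ℝ) 1, 0 < Fi fe h' x := by
    intro x hx; rw [hFh' x hx]; exact one_div_pos.mpr (hh'pos x hx)
  -- fixed point form
  have hsfix : ∀ x ∈ Set.Icc (0:ℝ) 1, h' x = Real.sqrt (h' x / Fi fe h' x) := by
    intro x hx
    rw [hFh' x hx, one_div, div_inv_eq_mul]
    exact (Real.sqrt_mul_self (hh'pos x hx).le).symm
  have hHfix : ∀ x ∈ Set.Icc (0:ℝ) 1, H x = Real.sqrt (H x / Fi fe H x) := by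
    intro x hx
    rw [hFH x hx, one_div, div_inv_eq_mul]
    exact (Real.sqrt_mul_self (hHpos x hx).le).symm
  -- at the max point: β * α₁ ≤ 1
  have hβα₁ : β * α₁ ≤ 1 := by
    have hcomp : h' x₁ ≤ Real.sqrt (β/α₁) * H x₁ := by
      rw [hsfix x₁ hx₁]
      calc Real.sqrt (h' x₁ / Fi fe h' x₁)
          ≤ Real.sqrt ((β * H x₁) / (α₁ * Fi fe H x₁)) := by
            apply Real.sqrt_le_sqrt
            exact div_le_div₀ (mul_nonneg hβpos.le (hHpos x₁ hx₁).le) (hu x₁ hx₁)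
              (mul_pos hα₁pos (hFHpos x₁ hx₁)) (hF x₁).1
        _ = Real.sqrt (β/α₁) * Real.sqrt (H x₁ / Fi fe H x₁) := by
            rw [← Real.sqrt_mul (div_nonneg hβpos.le hα₁pos.le), div_mul_div_comm]
        _ = Real.sqrt (β/α₁) * H x₁ := by rw [← hHfix x₁ hx₁]
    have hβle : β ≤ Real.sqrt (β/α₁) := by
      have h2 : β * H x₁ = h' x₁ := by
        rw [hβdef]; exact div_mul_cancel₀ _ (hHpos x₁ hx₁).ne'
      have := h2 ▸ hcomp
      exact le_of_mul_le_mul_right (by linarith) (hHpos x₁ hx₁)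
    have hsq : β^2 ≤ β/α₁ := by
      nlinarith [Real.sq_sqrt (div_nonneg hβpos.le hα₁pos.le), hβle,
        Real.sqrt_nonneg (β/α₁)]
    have h2 : β^2 * α₁ ≤ β := by
      rw [div_eq_mul_inv] at hsq
      calc β^2 * α₁ ≤ (β * α₁⁻¹) * α₁ := mul_le_mul_of_nonneg_right hsq hα₁pos.le
        _ = β := by field_simp
    nlinarith [h2, hβpos, hα₁pos]
  -- at the min point: 1 ≤ α * β₁
  have hαβ₁ : 1 ≤ α * β₁ := by
    have hcomp : Real.sqrt (α/β₁) * H x₀ ≤ h' x₀ := by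
      rw [hsfix x₀ hx₀]
      calc Real.sqrt (α/β₁) * H x₀
          = Real.sqrt (α/β₁) * Real.sqrt (H x₀ / Fi fe H x₀) := by rw [← hHfix x₀ hx₀]
        _ = Real.sqrt ((α * H x₀) / (β₁ * Fi fe H x₀)) := by
            rw [← Real.sqrt_mul (div_nonneg hαpos.le hβ₁pos.le), div_mul_div_comm]
        _ ≤ Real.sqrt (h' x₀ / Fi fe h' x₀) := by
            apply Real.sqrt_le_sqrt
            exact div_le_div₀ (hh'pos x₀ hx₀).le (hl x₀ hx₀) (hFh'pos x₀ hx₀) (hF x₀).2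
    have hαge : Real.sqrt (α/β₁) ≤ α := by
      have h2 : α * H x₀ = h' x₀ := by
        rw [hαdef]; exact div_mul_cancel₀ _ (hHpos x₀ hx₀).ne'
      have := h2 ▸ hcomp
      exact le_of_mul_le_mul_right (by linarith) (hHpos x₀ hx₀)
    have hsq : α/β₁ ≤ α^2 := by
      nlinarith [Real.sq_sqrt (div_nonneg hαpos.le hβ₁pos.le), hαge,
        Real.sqrt_nonneg (α/β₁)]
    have h2 : α ≤ α^2 * β₁ := by
      rw [div_eq_mul_inv] at hsq
      calc α = (α * β₁⁻¹) * β₁ := by field_simp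
        _ ≤ α^2 * β₁ := mul_le_mul_of_nonneg_right hsq hβ₁pos.le
    nlinarith [h2, hαpos, hβ₁pos]
  -- conclude β ≤ α
  have hβα : β ≤ α := by
    have h1 : β * α₁ ≤ α₁ * α + (1 - m/M) * α₁ * (β - α) := by
      calc β * α₁ ≤ 1 := hβα₁
        _ ≤ α * β₁ := hαβ₁
        _ ≤ α₁ * (α + (1 - m/M) * (β - α)) := hkeyA
        _ = α₁ * α + (1 - m/M) * α₁ * (β - α) := by ring
    -- hence α₁ (β-α)(m/M) ≤ 0
    have h2 : α₁ * (β - α) * (m/M) ≤ 0 := by nlinarith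
    have h3 : 0 < m/M := div_pos hm hM
    nlinarith [mul_pos hα₁pos h3]
  have hβeqα : β = α := le_antisymm hβα hαβ
  -- hence h' = α H on Icc
  have hprop : ∀ y ∈ Set.Icc (0:ℝ) 1, h' y = α * H y := by
    intro y hy
    have h1 := hmin y hy
    have h2 := hmax y hy
    rw [hβeqα] at h2
    have : h' y / H y = α := le_antisymm h2 h1
    rw [← this, div_mul_cancel₀ _ (hHpos y hy).ne']
  -- α = 1
  have hα1 : α = 1 := by
    have h0 : (0:ℝ) ∈ Set.Icc (0:ℝ) 1 := by norm_num
    have hFi : Fi fe h' 0 = α * Fi fe H 0 := by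
      rw [Fi, Fi, ← intervalIntegral.integral_const_mul]
      apply intervalIntegral.integral_congr
      intro y hy
      rw [Set.uIcc_of_le zero_le_one] at hy
      simp only
      rw [hprop y hy]; ring
    have hb := hh'bal 0 h0
    rw [hprop 0 h0, hFi] at hb
    have hb2 : α^2 * (H 0 * Fi fe H 0) = 1 := by linear_combination hb
    rw [hHbal 0 h0, mul_one] at hb2
    have : (α - 1) * (α + 1) = 0 := by linear_combination hb2
    rcases mul_eq_zero.mp this with h | h
    · linarith
    · linarith
  intro x hx
  rw [hprop x hx, hα1, one_mul]


end KSK1827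

open KSK1827 in
/-- For any bounded, continuous, strictly positive, symmetric
function f̂ on the unit square (e.g. a Gaussian kernel density estimate), there
is a unique strictly positive continuous balancing function ĥ, and the Kernel
Sinkhorn–Knopp iteration converges uniformly on [0,1] to ĥ. -/
theorem ksk_existence_uniqueness_convergence (fh : ℝ → ℝ → ℝ)
    (hfc : ContinuousOn (fun p : ℝ × ℝ => fh p.1 p.2)
      (Set.Icc 0 1 ×ˢ Set.Icc 0 1))
    (hfb : ∃ B : ℝ, ∀ x ∈ Set.Icc (0:ℝ) 1, ∀ y ∈ Set.Icc (0:ℝ) 1, fh x y ≤ B)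
    (hfpos : ∀ x ∈ Set.Icc (0:ℝ) 1, ∀ y ∈ Set.Icc (0:ℝ) 1, 0 < fh x y)
    (hfsymm : ∀ x y, fh x y = fh y x) :
    ∃ hh : ℝ → ℝ, ContinuousOn hh (Set.Icc 0 1) ∧
      (∀ x ∈ Set.Icc (0:ℝ) 1, 0 < hh x) ∧
      (∀ y ∈ Set.Icc (0:ℝ) 1, ∫ x in (0:ℝ)..1, hh x * fh x y * hh y = 1) ∧
      (∀ h' : ℝ → ℝ, ContinuousOn h' (Set.Icc 0 1) →
        (∀ x ∈ Set.Icc (0:ℝ) 1, 0 < h' x) →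
        (∀ y ∈ Set.Icc (0:ℝ) 1, ∫ x in (0:ℝ)..1, h' x * fh x y * h' y = 1) →
        ∀ x ∈ Set.Icc (0:ℝ) 1, h' x = hh x) ∧
      (∀ g : ℕ → ℝ → ℝ, (∀ x, g 0 x = 1) →
        (∀ t x, g (t + 1) x
          = Real.sqrt (g t x / ∫ y in (0:ℝ)..1, fh x y * g t y)) →
        TendstoUniformlyOn (fun t => g t) hh atTop (Set.Icc 0 1)) := by
  classical
  -- the clamping map
  set π : ℝ → ℝ := fun x => max 0 (min 1 x) with hπdef
  have hπcont : Continuous π := continuous_const.max (continuous_const.min continuous_id)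
  have hπmem : ∀ x, π x ∈ Set.Icc (0:ℝ) 1 :=
    fun x => ⟨le_max_left _ _, max_le zero_le_one (min_le_left _ _)⟩
  have hπid : ∀ x ∈ Set.Icc (0:ℝ) 1, π x = x := by
    intro x hx
    simp only [hπdef]
    rw [min_eq_right hx.2, max_eq_right hx.1]
  -- extended kernel
  set fe : ℝ → ℝ → ℝ := fun x y => fh (π x) (π y) with hfedef
  have hfeq : ∀ x ∈ Set.Icc (0:ℝ) 1, ∀ y ∈ Set.Icc (0:ℝ) 1, fe x y = fh x y := by
    intro x hx y hy
    simp only [hfedef]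
    rw [hπid x hx, hπid y hy]
  have hfecont : Continuous (Function.uncurry fe) := by
    have : Function.uncurry fe
        = (fun p : ℝ × ℝ => fh p.1 p.2) ∘ (fun p : ℝ × ℝ => (π p.1, π p.2)) := rfl
    rw [this]
    apply hfc.comp_continuous ((hπcont.comp continuous_fst).prodMk (hπcont.comp continuous_snd))
    intro p
    exact Set.mk_mem_prod (hπmem p.1) (hπmem p.2)
  -- min and max of the kernel
  have hsq : IsCompact ((Set.Icc (0:ℝ) 1) ×ˢ (Set.Icc (0:ℝ) 1)) :=
    isCompact_Icc.prod isCompact_Icc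
  have hsqne : ((Set.Icc (0:ℝ) 1) ×ˢ (Set.Icc (0:ℝ) 1)).Nonempty :=
    ⟨(0,0), by norm_num⟩
  obtain ⟨p₀, hp₀, hminOn⟩ := hsq.exists_isMinOn hsqne hfc
  set m : ℝ := fh p₀.1 p₀.2 with hmdef
  have hmpos : 0 < m := hfpos p₀.1 hp₀.1 p₀.2 hp₀.2
  obtain ⟨Mb, hMb⟩ := hfb
  have hlb : ∀ x y, m ≤ fe x y := by
    intro x y
    exact hminOn (Set.mk_mem_prod (hπmem x) (hπmem y))
  have hub : ∀ x y, fe x y ≤ Mb := by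
    intro x y
    exact hMb (π x) (hπmem x) (π y) (hπmem y)
  have hn : Nice fe m Mb := ⟨hfecont, hmpos, hlb, hub⟩
  have hMpos : 0 < Mb := lt_of_lt_of_le hmpos (le_trans (hlb 0 0) (hub 0 0))
  -- the limit function
  obtain ⟨H, hHc, hHb, hHbal, hconv⟩ := hn.limit
  have hApos : 0 < Real.sqrt (m/(Mb*Mb)) := Real.sqrt_pos.mpr (by positivity)
  have hHpos : ∀ x ∈ Set.Icc (0:ℝ) 1, 0 < H x :=
    fun x hx => lt_of_lt_of_le hApos (hHb x hx).1
  -- conversion between the two balancing forms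
  have hbal_conv : ∀ h' : ℝ → ℝ, (∀ y ∈ Set.Icc (0:ℝ) 1,
      (∫ x in (0:ℝ)..1, h' x * fh x y * h' y) = (Fi fe h' y) * h' y) := by
    intro h' y hy
    rw [Fi, ← intervalIntegral.integral_mul_const]
    apply intervalIntegral.integral_congr
    intro x hx
    rw [Set.uIcc_of_le zero_le_one] at hx
    simp only
    rw [hfeq y hy x hx, hfsymm x y]
    ring
  refine ⟨H, hHc, hHpos, ?_, ?_, ?_⟩
  · intro y hy
    rw [hbal_conv H y hy]
    linear_combination hHbal y hy
  · intro h' hh'c hh'pos hh'bal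
    apply hn.unique hHc hHpos hHbal hh'c hh'pos
    intro x hx
    have := hh'bal x hx
    rw [hbal_conv h' x hx] at this
    linear_combination this
  · intro g hg0 hgrec
    -- g agrees with the canonical iterates on [0,1]
    have hagree : ∀ t, ∀ x ∈ Set.Icc (0:ℝ) 1, g t x = Ge fe t x := by
      intro t
      induction t with
      | zero => intro x _; exact hg0 x
      | succ t ih =>
        intro x hx
        rw [hgrec t x]
        have hint : (∫ y in (0:ℝ)..1, fh x y * g t y) = Fi fe (Ge fe t) x := by
          rw [Fi]
          apply intervalIntegral.integral_congr
          intro y hy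
          rw [Set.uIcc_of_le zero_le_one] at hy
          simp only
          rw [hfeq x hx y hy, ih y hy]
        rw [hint, ih x hx]
        rfl
    rw [Metric.tendstoUniformlyOn_iff]
    intro δ hδ
    obtain ⟨N, hN⟩ := hconv δ hδ
    filter_upwards [eventually_ge_atTop N] with t ht x hx
    rw [Real.dist_eq, hagree t x hx, abs_sub_comm]
    exact hN t ht x hx
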